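/- Let n ≥ 1 and let M be a symmetric real n×n matrix which is negative definite (yᵀ M y < 0 for all y ≠ 0) and has nonnegative off-diagonal entries (M i j ≥ 0 for i ≠ j). Then M is invertible and all entries of the matrix N := -(M⁻¹) are nonnegative: N i j ≥ 0 for all i, j. -/
import Mathlib


open Matrix

/-- A negative definite symmetric matrix with nonnegative off-diagonal entries is
invertible, and the entries of the opposite of its inverse are all nonnegative. -/
theorem stmt16 (n : ℕ) (hn : 1 ≤ n) (M : Matrix (Fin n) (Fin n) ℝ)
    (hsymm : M.IsSymm)
    (hnegdef : ∀ y : Fin n → ℝ, y ≠ 0 → y ⬝ᵥ M.mulVec y < 0)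
    (hoff : ∀ i j : Fin n, i ≠ j → 0 ≤ M i j) :
    IsUnit M.det ∧ ∀ i j : Fin n, 0 ≤ (-(M⁻¹)) i j := by
  have hdet : M.det ≠ 0 := by
    intro h
    obtain ⟨v, hv, hMv⟩ := (Matrix.exists_mulVec_eq_zero_iff).2 h
    have := hnegdef v hv
    rw [hMv] at this
    simp at this
  have hunit : IsUnit M.det := isUnit_iff_ne_zero.mpr hdet
  refine ⟨hunit, ?_⟩
  intro i j
  set x : Fin n → ℝ := fun k => M⁻¹ k j with hxdef
  have hMx : M.mulVec x = fun i => (1 : Matrix (Fin n) (Fin n) ℝ) i j := by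
    funext i
    rw [← Matrix.mul_nonsing_inv M hunit]
    simp [Matrix.mulVec, dotProduct, Matrix.mul_apply, x]
  set q : Fin n → ℝ := fun k => max (x k) 0 with hqdef
  set p : Fin n → ℝ := fun k => max (-x k) 0 with hpdef
  have hq0 : ∀ k, 0 ≤ q k := fun k => le_max_right _ _
  have hp0 : ∀ k, 0 ≤ p k := fun k => le_max_right _ _
  have hqp : ∀ k, q k * p k = 0 := by
    intro k
    rcases le_total (x k) 0 with h | h
    · simp [hqdef, max_eq_right h]
    · simp [hpdef, max_eq_right (neg_nonpos.mpr h)]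
  have hxqp : x = q - p := by
    funext k
    simp only [Pi.sub_apply, hqdef, hpdef]
    rcases le_total (x k) 0 with h | h
    · rw [max_eq_right h, max_eq_left (neg_nonneg.mpr h)]; ring
    · rw [max_eq_left h, max_eq_right (neg_nonpos.mpr h)]; ring
  have h1 : q ⬝ᵥ M.mulVec x = q j := by
    rw [hMx]
    simp [dotProduct, Matrix.one_apply, mul_ite]
  have h2 : 0 ≤ q ⬝ᵥ M.mulVec p := by
    simp only [dotProduct, Matrix.mulVec, Finset.mul_sum]
    refine Finset.sum_nonneg fun a _ => ?_
    refine Finset.sum_nonneg fun b _ => ?_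
    rcases eq_or_ne a b with rfl | hab
    · have : q a * (M a a * p a) = (q a * p a) * M a a := by ring
      rw [this, hqp a, zero_mul]
    · exact mul_nonneg (hq0 a) (mul_nonneg (hoff a b hab) (hp0 b))
  have h3 : 0 ≤ q ⬝ᵥ M.mulVec q := by
    have hx' : q ⬝ᵥ M.mulVec q = q ⬝ᵥ M.mulVec x + q ⬝ᵥ M.mulVec p := by
      rw [hxqp, Matrix.mulVec_sub, dotProduct_sub]
      ring
    rw [hx', h1]
    exact add_nonneg (hq0 j) h2
  have hqzero : q = 0 := by
    by_contra hq
    exact absurd h3 (not_le.mpr (hnegdef q hq))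
  have hxle : x i ≤ 0 := by
    have := congrFun hqzero i
    simp only [hqdef, Pi.zero_apply] at this
    by_contra h
    push_neg at h
    rw [max_eq_left h.le] at this
    exact h.ne' this
  simpa [x] using neg_nonneg.mpr hxle
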